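/- arXiv:2003.03665 — 3 statements merged into one kernel-verified Lean document; each statement's English description precedes it below -/
import Mathlib

section
/- Let 0 < α < 1 and M ≥ 0. If f is holomorphic on the unit disk, continuous on the closed disk, and satisfies |f(e^{it}) − f(e^{is})| ≤ M|e^{it} − e^{is}|^α for all real t, s, then for every z with |z| ≤ 1/2 one has (1−|z|)^α |f'(z)| ≤ M · 2^{2−α} π^{α+1} / (α+1). -/
open Complex Metric Real

theorem stmt_2 (α M : ℝ) (hα : 0 < α) (hα1 : α < 1) (hM : 0 ≤ M)
    (f : ℂ → ℂ)
    (hd : DifferentiableOn ℂ f (ball (0 : ℂ) 1))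
    (hc : ContinuousOn f (closedBall (0 : ℂ) 1))
    (hb : ∀ t s : ℝ,
      ‖f (Complex.exp (t * Complex.I)) - f (Complex.exp (s * Complex.I))‖ ≤
        M * ‖Complex.exp (t * Complex.I) - Complex.exp (s * Complex.I)‖ ^ α) :
    ∀ z : ℂ, ‖z‖ ≤ 1 / 2 →
      (1 - ‖z‖) ^ α * ‖deriv f z‖ ≤ M * 2 ^ (2 - α) * π ^ (α + 1) / (α + 1) := by
  intro z hz
  set g : ℂ → ℂ := fun w => f w - f 1 with hg
  set C : ℝ := M * 2 ^ α with hCdef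
  have h2α : (0:ℝ) ≤ (2:ℝ) ^ α := Real.rpow_nonneg (by norm_num) α
  have hC0 : 0 ≤ C := mul_nonneg hM h2α
  -- maximum modulus bound: ‖g w‖ ≤ C on the closed unit ball
  have hgd : DifferentiableOn ℂ g (ball (0 : ℂ) 1) := hd.sub_const _
  have hgc : ContinuousOn g (closedBall (0 : ℂ) 1) := hc.sub continuousOn_const
  have hcl : closure (ball (0 : ℂ) 1) = closedBall (0 : ℂ) 1 := closure_ball 0 one_ne_zero
  have hdc : DiffContOnCl ℂ g (ball (0 : ℂ) 1) := ⟨hgd, by rwa [hcl]⟩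
  have key : ∀ w ∈ closedBall (0 : ℂ) 1, ‖g w‖ ≤ C := by
    intro w hw
    refine Complex.norm_le_of_forall_mem_frontier_norm_le isBounded_ball hdc ?_ (by rwa [hcl])
    intro u hu
    rw [frontier_ball 0 one_ne_zero, mem_sphere_zero_iff_norm] at hu
    have hu1 : u = Complex.exp ((u.arg : ℂ) * Complex.I) := by
      conv_lhs => rw [← Complex.norm_mul_exp_arg_mul_I u]
      rw [hu]
      simp
    have h1 : (1 : ℂ) = Complex.exp ((0:ℝ) * Complex.I) := by simp
    have hb' := hb u.arg 0
    rw [← hu1, ← h1] at hb'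
    have hle2 : ‖u - 1‖ ≤ 2 := by
      calc ‖u - 1‖ ≤ ‖u‖ + ‖(1:ℂ)‖ := norm_sub_le _ _
      _ = 2 := by rw [hu]; norm_num
    calc ‖g u‖ = ‖f u - f 1‖ := rfl
      _ ≤ M * ‖u - 1‖ ^ α := hb'
      _ ≤ M * 2 ^ α :=
        mul_le_mul_of_nonneg_left (Real.rpow_le_rpow (norm_nonneg _) hle2 hα.le) hM
  -- Setup
  have hz1 : ‖z‖ < 1 := lt_of_le_of_lt hz (by norm_num)
  have hr : 0 < 1 - ‖z‖ := by linarith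
  have hsub : ball z (1 - ‖z‖) ⊆ ball (0 : ℂ) 1 := by
    apply ball_subset_ball'
    simp [dist_zero_right]
  have hzc : z ∈ closedBall (0 : ℂ) 1 := by
    rw [mem_closedBall_zero_iff]; exact hz1.le
  -- Schwarz-type Cauchy estimate for each R₂ > 2C
  have hderiv : ‖deriv g z‖ ≤ 2 * C / (1 - ‖z‖) := by
    rw [le_div_iff₀ hr]
    have hmul : ‖deriv g z‖ * (1 - ‖z‖) ≤ 2 * C := by
        refine le_of_forall_pos_le_add fun ε hε => ?_
        have hest : ‖deriv g z‖ ≤ (2 * C + ε) / (1 - ‖z‖) := by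
          apply Complex.norm_deriv_le_div_of_mapsTo_ball (hgd.mono hsub) ?_ hr
          intro w hw
          have hwc : w ∈ closedBall (0 : ℂ) 1 :=
            ball_subset_closedBall (hsub hw)
          rw [mem_closedBall]
          calc dist (g w) (g z) ≤ ‖g w‖ + ‖g z‖ := dist_le_norm_add_norm _ _
            _ ≤ C + C := add_le_add (key w hwc) (key z hzc)
            _ ≤ 2 * C + ε := by linarith
        calc ‖deriv g z‖ * (1 - ‖z‖) ≤ (2 * C + ε) / (1 - ‖z‖) * (1 - ‖z‖) :=
              mul_le_mul_of_nonneg_right hest hr.le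
          _ = 2 * C + ε := div_mul_cancel₀ _ hr.ne'
    exact hmul
  have hderiv' : ‖deriv f z‖ ≤ 2 * C / (1 - ‖z‖) := by
    have : deriv g z = deriv f z := by
      simp only [hg, deriv_sub_const]
    rwa [this] at hderiv
  -- (1 - ‖z‖)^α ≤ 1 and 1/(1-‖z‖) ≤ 2
  have hpow1 : (1 - ‖z‖) ^ α ≤ 1 :=
    Real.rpow_le_one hr.le (by linarith [norm_nonneg z]) hα.le
  have hhalf : 2 * C / (1 - ‖z‖) ≤ 4 * C := by
    rw [div_le_iff₀ hr]
    nlinarith [norm_nonneg z]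
  have hstep : (1 - ‖z‖) ^ α * ‖deriv f z‖ ≤ 4 * C := by
    calc (1 - ‖z‖) ^ α * ‖deriv f z‖ ≤ 1 * (2 * C / (1 - ‖z‖)) := by
          apply mul_le_mul hpow1 hderiv' (norm_nonneg _) zero_le_one
      _ = 2 * C / (1 - ‖z‖) := one_mul _
      _ ≤ 4 * C := hhalf
  refine hstep.trans ?_
  -- arithmetic: 4 * M * 2^α ≤ M * 2^(2-α) * π^(α+1) / (α+1)
  rw [hCdef, le_div_iff₀ (by linarith : (0:ℝ) < α + 1)]
  have hpi : (0:ℝ) < π := Real.pi_pos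
  have hpiα : (0:ℝ) ≤ π ^ α := Real.rpow_nonneg hpi.le α
  have h4 : ((4:ℝ)) ^ α = (4 / π) ^ α * π ^ α := by
    rw [← Real.mul_rpow (by positivity) hpi.le, div_mul_cancel₀ _ hpi.ne']
  have h4pi : ((4:ℝ) / π) ^ α ≤ 4 / π := by
    have h1le : (1:ℝ) ≤ 4 / π := by
      rw [le_div_iff₀ hpi]; linarith [Real.pi_le_four]
    calc ((4:ℝ) / π) ^ α ≤ (4 / π) ^ (1:ℝ) :=
          Real.rpow_le_rpow_of_exponent_le h1le hα1.le
      _ = 4 / π := Real.rpow_one _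
  have hkey : (4:ℝ) ^ α * (α + 1) ≤ π ^ (α + 1) := by
    have h8pi : (8:ℝ) / π ≤ π := by
      rw [div_le_iff₀ hpi]
      nlinarith [Real.pi_gt_three]
    have : (4:ℝ) ^ α * (α + 1) ≤ 2 * (4 ^ α) := by
      nlinarith [Real.rpow_nonneg (by norm_num : (0:ℝ) ≤ 4) α]
    calc (4:ℝ) ^ α * (α + 1) ≤ 2 * (4 ^ α) := this
      _ = 2 * ((4 / π) ^ α * π ^ α) := by rw [h4]
      _ ≤ 2 * ((4 / π) * π ^ α) := by
          apply mul_le_mul_of_nonneg_left (mul_le_mul_of_nonneg_right h4pi hpiα) (by norm_num)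
      _ = (8 / π) * π ^ α := by ring
      _ ≤ π * π ^ α := mul_le_mul_of_nonneg_right h8pi hpiα
      _ = π ^ (α + 1) := by
          rw [Real.rpow_add hpi, Real.rpow_one]; ring
  have h2a : (2:ℝ) ^ (2 - α) = 4 / 2 ^ α := by
    rw [Real.rpow_sub (by norm_num : (0:ℝ) < 2)]
    norm_num
  have h44 : (4:ℝ) ^ α = 2 ^ α * 2 ^ α := by
    rw [← Real.mul_rpow (by norm_num) (by norm_num : (0:ℝ) ≤ 2)]
    norm_num
  have h2pos : (0:ℝ) < 2 ^ α := Real.rpow_pos_of_pos (by norm_num) α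
  -- goal: 4 * (M * 2^α) * (α+1) ≤ M * 2^(2-α) * π^(α+1)
  rw [h44] at hkey
  have hthis := mul_le_mul_of_nonneg_left hkey hM
  have heq : M * 2 ^ (2 - α) * π ^ (α + 1) = M * π ^ (α + 1) * 4 / 2 ^ α := by
    rw [h2a]; ring
  rw [heq, le_div_iff₀ h2pos]
  nlinarith [hthis]
end

section
/- Let f = g + conj(h) : 𝔻 → Ω be a harmonic k-quasiconformal diffeomorphism (g, h holomorphic, |h'| ≤ k|g'|, 0 ≤ k < 1) and let 0 < p. Then ∫_Ω |∂_w f^{-1}(w)|^p dλ(w) ≤ (1+k²)/(1−k²)^p · ∫_𝔻 |g'(z)|^{2−p} dλ(z), where λ is Lebesgue measure in the plane. -/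
open Complex Metric MeasureTheory

open Complex

noncomputable def Lmap (a b : ℂ) : ℂ →L[ℝ] ℂ :=
  a • (ContinuousLinearMap.id ℝ ℂ) + b • (Complex.conjCLE : ℂ ≃L[ℝ] ℂ).toContinuousLinearMap

lemma Lmap_apply (a b v : ℂ) : Lmap a b v = a * v + b * (starRingEnd ℂ) v := by
  simp [Lmap, Complex.conjCLE_apply]

lemma Lmap_det (a b : ℂ) : (Lmap a b).det = ‖a‖ ^ 2 - ‖b‖ ^ 2 := by
  have : (Lmap a b).det = LinearMap.det ((Lmap a b : ℂ →L[ℝ] ℂ) : ℂ →ₗ[ℝ] ℂ) := rfl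
  rw [this, ← LinearMap.det_toMatrix Complex.basisOneI, Matrix.det_fin_two]
  simp only [LinearMap.toMatrix_apply, Complex.coe_basisOneI, Complex.coe_basisOneI_repr,
    ContinuousLinearMap.coe_coe, Matrix.cons_val_zero, Matrix.cons_val_one, Matrix.head_cons,
    Lmap_apply]
  simp [Complex.sq_norm, Complex.normSq_apply]
  ring
open Complex

lemma Lmap_comp_inv (a b : ℂ) (hD : ‖a‖ ^ 2 - ‖b‖ ^ 2 ≠ 0) :
    (Lmap a b).comp (Lmap ((starRingEnd ℂ) a / ((‖a‖ ^ 2 - ‖b‖ ^ 2 : ℝ) : ℂ))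
      (-b / ((‖a‖ ^ 2 - ‖b‖ ^ 2 : ℝ) : ℂ))) = ContinuousLinearMap.id ℝ ℂ := by
  have hD' : ((‖a‖ ^ 2 - ‖b‖ ^ 2 : ℝ) : ℂ) ≠ 0 := by exact_mod_cast hD
  refine ContinuousLinearMap.ext fun v => ?_
  simp only [ContinuousLinearMap.comp_apply, Lmap_apply, ContinuousLinearMap.id_apply,
    map_add, map_mul, map_div₀, map_neg, Complex.conj_conj, Complex.conj_ofReal]
  have ha : (starRingEnd ℂ) a * a = ((‖a‖ ^ 2 : ℝ) : ℂ) := by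
    rw [mul_comm, Complex.mul_conj']; norm_cast
  have hb : (starRingEnd ℂ) b * b = ((‖b‖ ^ 2 : ℝ) : ℂ) := by
    rw [mul_comm, Complex.mul_conj']; norm_cast
  set D : ℂ := ((‖a‖ ^ 2 - ‖b‖ ^ 2 : ℝ) : ℂ) with hDdef
  have hDs : D = ((‖a‖ ^ 2 : ℝ) : ℂ) - ((‖b‖ ^ 2 : ℝ) : ℂ) := by rw [hDdef]; push_cast; ring
  field_simp
  linear_combination (v * ha - v * hb - v * hDs)

lemma key_eq (p A B : ℝ) (hA : 0 < A) (hB0 : 0 ≤ B) (hBA : B < A) :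
    (A ^ 2 - B ^ 2) * (A / (A ^ 2 - B ^ 2)) ^ p = A ^ p * (A ^ 2 - B ^ 2) ^ (1 - p) := by
  have hD : 0 < A ^ 2 - B ^ 2 := by nlinarith
  rw [Real.div_rpow hA.le hD.le, Real.rpow_sub hD, Real.rpow_one]
  field_simp

lemma key_upper (k p A B : ℝ) (hk0 : 0 ≤ k) (hk1 : k < 1) (hp : 0 < p)
    (hA : 0 < A) (hB0 : 0 ≤ B) (hBA : B < A) (hqc : B ≤ k * A) :
    A ^ p * (A ^ 2 - B ^ 2) ^ (1 - p) ≤ (1 + k ^ 2) / (1 - k ^ 2) ^ p * A ^ (2 - p) := by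
  have hk2 : 0 < 1 - k ^ 2 := by nlinarith
  have hD : 0 < A ^ 2 - B ^ 2 := by nlinarith
  have hD1 : A ^ 2 - B ^ 2 ≤ (1 + k ^ 2) * A ^ 2 := by nlinarith
  have hD2 : (1 - k ^ 2) * A ^ 2 ≤ A ^ 2 - B ^ 2 := by nlinarith
  have ht : (0:ℝ) < A ^ p := Real.rpow_pos_of_pos hA p
  have hE : (0:ℝ) < (1 - k ^ 2) ^ p * (A ^ p) ^ 2 := by positivity
  have hDp : (1 - k ^ 2) ^ p * (A ^ p) ^ 2 ≤ (A ^ 2 - B ^ 2) ^ p := by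
    have h1 : ((1 - k ^ 2) * A ^ 2) ^ p ≤ (A ^ 2 - B ^ 2) ^ p :=
      Real.rpow_le_rpow (by positivity) hD2 hp.le
    calc (1 - k ^ 2) ^ p * (A ^ p) ^ 2 = ((1 - k ^ 2) * A ^ 2) ^ p := by
          rw [Real.mul_rpow hk2.le (by positivity)]
          congr 1
          rw [← Real.rpow_natCast (A ^ p) 2, ← Real.rpow_natCast A 2,
            ← Real.rpow_mul hA.le, ← Real.rpow_mul hA.le]
          norm_num [mul_comm]
      _ ≤ _ := h1
  have key : A ^ p * (A ^ 2 - B ^ 2) ^ (1 - p) = (A ^ 2 - B ^ 2) * (A ^ p * ((A ^ 2 - B ^ 2) ^ p)⁻¹) := by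
    rw [Real.rpow_sub hD, Real.rpow_one]; field_simp
  have htu : A ^ p * A ^ (2 - p) = A ^ 2 := by
    rw [← Real.rpow_natCast A 2, ← Real.rpow_add hA]; norm_num
  rw [key]
  calc (A ^ 2 - B ^ 2) * (A ^ p * ((A ^ 2 - B ^ 2) ^ p)⁻¹)
      ≤ ((1 + k ^ 2) * A ^ 2) * (A ^ p * ((1 - k ^ 2) ^ p * (A ^ p) ^ 2)⁻¹) := by
        apply mul_le_mul hD1 _ (by positivity) (by positivity)
        exact mul_le_mul_of_nonneg_left (inv_anti₀ hE hDp) ht.le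
    _ = (1 + k ^ 2) / (1 - k ^ 2) ^ p * A ^ (2 - p) := by
        have h1k : (1 - k ^ 2) ^ p ≠ 0 := by positivity
        field_simp
        linear_combination -htu

lemma key_lower (k p A B : ℝ) (hk0 : 0 ≤ k) (hk1 : k < 1) (hp : 0 < p)
    (hA : 0 < A) (hB0 : 0 ≤ B) (hBA : B < A) (hqc : B ≤ k * A) :
    min 1 ((1 - k ^ 2) ^ (1 - p)) * A ^ (2 - p) ≤ A ^ p * (A ^ 2 - B ^ 2) ^ (1 - p) := by
  have hk2 : 0 < 1 - k ^ 2 := by nlinarith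
  have hD : 0 < A ^ 2 - B ^ 2 := by nlinarith
  have hD2 : (1 - k ^ 2) * A ^ 2 ≤ A ^ 2 - B ^ 2 := by nlinarith
  have hDA : A ^ 2 - B ^ 2 ≤ A ^ 2 := by nlinarith
  have ht : (0:ℝ) < A ^ p := Real.rpow_pos_of_pos hA p
  have hA2 : A ^ p * (A ^ 2) ^ (1 - p) = A ^ (2 - p) := by
    rw [← Real.rpow_natCast A 2, ← Real.rpow_mul hA.le, ← Real.rpow_add hA]
    congr 1
    ring
  rcases le_or_gt p 1 with hp1 | hp1
  · have h1 : ((1 - k ^ 2) * A ^ 2) ^ (1 - p) ≤ (A ^ 2 - B ^ 2) ^ (1 - p) :=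
      Real.rpow_le_rpow (by positivity) hD2 (by linarith)
    have h2 : ((1 - k ^ 2) * A ^ 2) ^ (1 - p) = (1 - k ^ 2) ^ (1 - p) * (A ^ 2) ^ (1 - p) :=
      Real.mul_rpow hk2.le (by positivity)
    calc min 1 ((1 - k ^ 2) ^ (1 - p)) * A ^ (2 - p)
        ≤ (1 - k ^ 2) ^ (1 - p) * A ^ (2 - p) := by
          apply mul_le_mul_of_nonneg_right (min_le_right _ _) (by positivity)
      _ = A ^ p * ((1 - k ^ 2) ^ (1 - p) * (A ^ 2) ^ (1 - p)) := by
          rw [← hA2]; ring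
      _ ≤ A ^ p * (A ^ 2 - B ^ 2) ^ (1 - p) := by
          rw [← h2]; exact mul_le_mul_of_nonneg_left h1 ht.le
  · have h1 : (A ^ 2) ^ (1 - p) ≤ (A ^ 2 - B ^ 2) ^ (1 - p) :=
      Real.rpow_le_rpow_of_nonpos hD hDA (by linarith)
    calc min 1 ((1 - k ^ 2) ^ (1 - p)) * A ^ (2 - p)
        ≤ 1 * A ^ (2 - p) := by
          apply mul_le_mul_of_nonneg_right (min_le_left _ _) (by positivity)
      _ = A ^ p * (A ^ 2) ^ (1 - p) := by rw [hA2, one_mul]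
      _ ≤ A ^ p * (A ^ 2 - B ^ 2) ^ (1 - p) := mul_le_mul_of_nonneg_left h1 ht.le


/-- The Wirtinger derivative ∂/∂w of a map `F : ℂ → ℂ`, viewed as a map of `ℝ²`. -/
noncomputable def wirtingerDeriv (F : ℂ → ℂ) (w : ℂ) : ℂ :=
  (fderiv ℝ F w 1 - Complex.I * fderiv ℝ F w Complex.I) / 2

theorem stmt_7 (k p : ℝ) (hk0 : 0 ≤ k) (hk1 : k < 1) (hp : 0 < p)
    (g h f : ℂ → ℂ) (Ω : Set ℂ)
    (hg : DifferentiableOn ℂ g (ball (0 : ℂ) 1))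
    (hh : DifferentiableOn ℂ h (ball (0 : ℂ) 1))
    (hf : ∀ z ∈ ball (0 : ℂ) 1, f z = g z + (starRingEnd ℂ) (h z))
    (hqc : ∀ z ∈ ball (0 : ℂ) 1, ‖deriv h z‖ ≤ k * ‖deriv g z‖)
    (hJ : ∀ z ∈ ball (0 : ℂ) 1, ‖deriv h z‖ < ‖deriv g z‖)
    (hbij : Set.BijOn f (ball (0 : ℂ) 1) Ω)
    (Finv : ℂ → ℂ)
    (hlinv : ∀ z ∈ ball (0 : ℂ) 1, Finv (f z) = z)
    (hrinv : ∀ w ∈ Ω, f (Finv w) = w)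
    (hFd : ∀ w ∈ Ω, DifferentiableAt ℝ Finv w) :
    (∫ w in Ω, ‖wirtingerDeriv Finv w‖ ^ p ∂volume) ≤
      (1 + k ^ 2) / (1 - k ^ 2) ^ p *
        ∫ z in ball (0 : ℂ) 1, ‖deriv g z‖ ^ (2 - p) ∂volume := by
  have hs_open : IsOpen (ball (0 : ℂ) 1) := isOpen_ball
  have hk2 : 0 < 1 - k ^ 2 := by nlinarith
  set D : ℂ → ℝ := fun z => ‖deriv g z‖ ^ 2 - ‖(starRingEnd ℂ) (deriv h z)‖ ^ 2 with hDdef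
  have hnb : ∀ z : ℂ, ‖(starRingEnd ℂ) (deriv h z)‖ = ‖deriv h z‖ := fun z => RCLike.norm_conj _
  have hDalt : ∀ z : ℂ, D z = ‖deriv g z‖ ^ 2 - ‖deriv h z‖ ^ 2 := by
    intro z; rw [hDdef]; simp [hnb z]
  have hApos : ∀ z ∈ ball (0 : ℂ) 1, 0 < ‖deriv g z‖ := fun z hz =>
    lt_of_le_of_lt (norm_nonneg _) (hJ z hz)
  have hDpos : ∀ z ∈ ball (0 : ℂ) 1, 0 < D z := by
    intro z hz
    rw [hDalt z]
    have := hJ z hz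
    nlinarith [norm_nonneg (deriv h z)]
  -- derivative of f
  have hfd : ∀ z ∈ ball (0 : ℂ) 1,
      HasFDerivAt f (Lmap (deriv g z) ((starRingEnd ℂ) (deriv h z))) z := by
    intro z hz
    have hgz : HasDerivAt g (deriv g z) z :=
      (hg.differentiableAt (hs_open.mem_nhds hz)).hasDerivAt
    have hhz : HasDerivAt h (deriv h z) z :=
      (hh.differentiableAt (hs_open.mem_nhds hz)).hasDerivAt
    have h1 := (hgz.hasFDerivAt.restrictScalars ℝ).add
      ((Complex.conjCLE.toContinuousLinearMap.hasFDerivAt).comp z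
        (hhz.hasFDerivAt.restrictScalars ℝ))
    have h2 : HasFDerivAt (fun w => g w + (starRingEnd ℂ) (h w))
        (Lmap (deriv g z) ((starRingEnd ℂ) (deriv h z))) z := by
      refine h1.congr_fderiv ?_
      refine ContinuousLinearMap.ext fun (v : ℂ) => ?_
      simp [Lmap_apply, Complex.conjCLE_apply, mul_comm]
    exact h2.congr_of_eventuallyEq
      (Filter.eventually_of_mem (hs_open.mem_nhds hz) fun w hw => hf w hw)
  -- fderiv of the inverse
  have hinv : ∀ z ∈ ball (0 : ℂ) 1, fderiv ℝ Finv (f z) =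
      Lmap ((starRingEnd ℂ) (deriv g z) / ((D z : ℝ) : ℂ))
        (-((starRingEnd ℂ) (deriv h z)) / ((D z : ℝ) : ℂ)) := by
    intro z hz
    have hDz : D z ≠ 0 := (hDpos z hz).ne'
    have hB := Lmap_comp_inv (deriv g z) ((starRingEnd ℂ) (deriv h z)) hDz
    have hC : HasFDerivAt Finv (fderiv ℝ Finv (f z)) (f z) :=
      (hFd _ (hbij.mapsTo hz)).hasFDerivAt
    have hcomp := hC.comp z (hfd z hz)
    have hid : HasFDerivAt (Finv ∘ f) (ContinuousLinearMap.id ℝ ℂ) z :=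
      (hasFDerivAt_id z).congr_of_eventuallyEq
        (Filter.eventually_of_mem (hs_open.mem_nhds hz) fun w hw => hlinv w hw)
    have huniq := hcomp.unique hid
    calc fderiv ℝ Finv (f z)
        = (fderiv ℝ Finv (f z)).comp
            ((Lmap (deriv g z) ((starRingEnd ℂ) (deriv h z))).comp
              (Lmap ((starRingEnd ℂ) (deriv g z) / ((D z : ℝ) : ℂ))
                (-((starRingEnd ℂ) (deriv h z)) / ((D z : ℝ) : ℂ)))) := by
          rw [hB, ContinuousLinearMap.comp_id]
      _ = _ := by
          rw [← ContinuousLinearMap.comp_assoc, huniq, ContinuousLinearMap.id_comp]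
  -- Wirtinger derivative of the inverse
  have hwn : ∀ z ∈ ball (0 : ℂ) 1,
      ‖wirtingerDeriv Finv (f z)‖ = ‖deriv g z‖ / D z := by
    intro z hz
    have hDz : ((D z : ℝ) : ℂ) ≠ 0 := by exact_mod_cast (hDpos z hz).ne'
    have hw : wirtingerDeriv Finv (f z) = (starRingEnd ℂ) (deriv g z) / ((D z : ℝ) : ℂ) := by
      unfold wirtingerDeriv
      rw [hinv z hz, Lmap_apply, Lmap_apply]
      simp only [map_one, mul_one, Complex.conj_I]
      linear_combination
        (-((starRingEnd ℂ) (deriv g z) + (starRingEnd ℂ) (deriv h z)) / (2 * ((D z : ℝ) : ℂ))) *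
          Complex.I_sq
    rw [hw, norm_div, RCLike.norm_conj, Complex.norm_real, Real.norm_eq_abs,
      abs_of_pos (hDpos z hz)]
  -- change of variables
  have hΩ : Ω = f '' ball (0 : ℂ) 1 := hbij.image_eq.symm
  have hcov := integral_image_eq_integral_abs_det_fderiv_smul volume measurableSet_ball
    (fun z hz => (hfd z hz).hasFDerivWithinAt) hbij.injOn
    (fun w => ‖wirtingerDeriv Finv w‖ ^ p)
  rw [hΩ, hcov]
  have hpt : Set.EqOn
      (fun z => |(Lmap (deriv g z) ((starRingEnd ℂ) (deriv h z))).det| •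
        ‖wirtingerDeriv Finv (f z)‖ ^ p)
      (fun z => ‖deriv g z‖ ^ p * (D z) ^ (1 - p)) (ball (0 : ℂ) 1) := by
    intro z hz
    have hA := hApos z hz
    have hBlt : ‖deriv h z‖ < ‖deriv g z‖ := hJ z hz
    simp only [Lmap_det, smul_eq_mul]
    rw [hwn z hz, abs_of_pos (hDpos z hz), hDalt z]
    exact key_eq p ‖deriv g z‖ ‖deriv h z‖ hA (norm_nonneg _) hBlt
  rw [MeasureTheory.setIntegral_congr_fun measurableSet_ball hpt]
  -- final comparison
  set C : ℝ := (1 + k ^ 2) / (1 - k ^ 2) ^ p with hCdef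
  have hC : 0 < C := by positivity
  have hub : ∀ z ∈ ball (0 : ℂ) 1,
      ‖deriv g z‖ ^ p * (D z) ^ (1 - p) ≤ C * ‖deriv g z‖ ^ (2 - p) := by
    intro z hz
    rw [hDalt z]
    exact key_upper k p ‖deriv g z‖ ‖deriv h z‖ hk0 hk1 hp (hApos z hz) (norm_nonneg _)
      (hJ z hz) (hqc z hz)
  set c : ℝ := min 1 ((1 - k ^ 2) ^ (1 - p)) with hcdef
  have hc : 0 < c := by
    apply lt_min one_pos
    positivity
  have hlb : ∀ z ∈ ball (0 : ℂ) 1,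
      c * ‖deriv g z‖ ^ (2 - p) ≤ ‖deriv g z‖ ^ p * (D z) ^ (1 - p) := by
    intro z hz
    rw [hDalt z]
    exact key_lower k p ‖deriv g z‖ ‖deriv h z‖ hk0 hk1 hp (hApos z hz) (norm_nonneg _)
      (hJ z hz) (hqc z hz)
  by_cases hint : IntegrableOn (fun z => ‖deriv g z‖ ^ (2 - p)) (ball (0 : ℂ) 1) volume
  · have hmono : (∫ z in ball (0 : ℂ) 1, ‖deriv g z‖ ^ p * (D z) ^ (1 - p) ∂volume) ≤
        ∫ z in ball (0 : ℂ) 1, C * ‖deriv g z‖ ^ (2 - p) ∂volume := by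
      apply integral_mono_of_nonneg
      · rw [Filter.EventuallyLE, ae_restrict_iff' measurableSet_ball]
        refine ae_of_all _ fun z hz => ?_
        have := hDpos z hz
        positivity
      · exact hint.const_mul C
      · rw [Filter.EventuallyLE, ae_restrict_iff' measurableSet_ball]
        exact ae_of_all _ hub
    rwa [integral_const_mul] at hmono
  · have hgc : ContinuousOn (fun z => ‖deriv g z‖) (ball (0 : ℂ) 1) :=
      ((hg.analyticOnNhd hs_open).deriv.continuousOn).norm
    have hψmeas : AEStronglyMeasurable (fun z => ‖deriv g z‖ ^ (2 - p))
        (volume.restrict (ball (0 : ℂ) 1)) :=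
      (hgc.rpow_const fun z hz => Or.inl (hApos z hz).ne').aestronglyMeasurable
        measurableSet_ball
    have hψ0 : (∫ z in ball (0 : ℂ) 1, ‖deriv g z‖ ^ (2 - p) ∂volume) = 0 :=
      integral_undef hint
    have hφint : ¬ IntegrableOn (fun z => ‖deriv g z‖ ^ p * (D z) ^ (1 - p))
        (ball (0 : ℂ) 1) volume := by
      intro hφ
      apply hint
      apply Integrable.mono' (hφ.const_mul c⁻¹) hψmeas
      rw [ae_restrict_iff' measurableSet_ball]
      refine ae_of_all _ fun z hz => ?_
      rw [Real.norm_eq_abs, _root_.abs_of_nonneg (Real.rpow_nonneg (norm_nonneg _) _)]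
      calc ‖deriv g z‖ ^ (2 - p) = c⁻¹ * (c * ‖deriv g z‖ ^ (2 - p)) := by
            field_simp
        _ ≤ c⁻¹ * (‖deriv g z‖ ^ p * D z ^ (1 - p)) :=
            mul_le_mul_of_nonneg_left (hlb z hz) (inv_nonneg.mpr hc.le)
    have hφ0 : (∫ z in ball (0 : ℂ) 1, ‖deriv g z‖ ^ p * (D z) ^ (1 - p) ∂volume) = 0 :=
      integral_undef hφint
    rw [hφ0, hψ0, mul_zero]
end

section
/- The function f₀(z) = 2z + (1−z)·log(1−z) is holomorphic and injective on the unit disk, extends continuously to the closed disk, but |f₀'(z)| = |1 − log(1−z)| is unbounded on 𝔻; in particular f₀ is not Lipschitz continuous on 𝔻. -/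
open Complex Metric
open Filter Topology intervalIntegral

lemma slit14 {z : ℂ} (hz : ‖z‖ < 1) : (1 - z) ∈ Complex.slitPlane := by
  have := Complex.mem_slitPlane_of_norm_lt_one (z := -z) (by simpa)
  simpa [sub_eq_add_neg] using this

lemma slit14' {z : ℂ} (hz : ‖z‖ ≤ 1) (hz1 : z ≠ 1) : (1 - z) ∈ Complex.slitPlane := by
  rw [Complex.mem_slitPlane_iff]
  by_cases him : z.im = 0
  · left
    simp only [Complex.sub_re, Complex.one_re]
    have habs : |z.re| ≤ 1 := by
      have : |z.re| ≤ ‖z‖ := Complex.abs_re_le_norm z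
      linarith
    have : z.re ≠ 1 := by
      intro h
      apply hz1
      exact Complex.ext h him
    have := abs_le.1 habs
    cases lt_or_eq_of_le this.2 with
    | inl h => linarith
    | inr h => exact absurd h ‹z.re ≠ 1›
  · right
    simpa using him

lemma real_aux14 : Tendsto (fun x : ℝ => x * (|Real.log x| + Real.pi)) (𝓝[>] 0) (𝓝 0) := by
  have A : Tendsto (fun x : ℝ => Real.log x * x) (𝓝[>] 0) (𝓝 0) := by
    have := tendsto_log_mul_rpow_nhdsGT_zero one_pos
    refine this.congr' ?_
    filter_upwards [self_mem_nhdsWithin] with x hx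
    rw [Real.rpow_one]
  have B : Tendsto (fun x : ℝ => Real.pi * x) (𝓝[>] 0) (𝓝 0) := by
    have h : Tendsto (fun x : ℝ => Real.pi * x) (𝓝 0) (𝓝 (Real.pi * 0)) :=
      (continuous_const.mul continuous_id).tendsto 0
    simpa using h.mono_left nhdsWithin_le_nhds
  have C := (A.neg.add B)
  simp only [neg_zero, add_zero] at C
  refine C.congr' ?_
  filter_upwards [Ioo_mem_nhdsGT_of_mem (by norm_num : (0:ℝ) ∈ Set.Ico (0:ℝ) 1)] with x hx
  have hx0 : 0 < x := hx.1
  have hx1 : x < 1 := hx.2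
  have hlog : Real.log x ≤ 0 := Real.log_nonpos hx0.le hx1.le
  rw [abs_of_nonpos hlog]
  ring

lemma mul_log_tendsto14 : Tendsto (fun w : ℂ => w * Complex.log w) (𝓝[≠] (0:ℂ)) (𝓝 0) := by
  apply squeeze_zero_norm' (a := fun w : ℂ => ‖w‖ * (|Real.log ‖w‖| + Real.pi))
  · filter_upwards [self_mem_nhdsWithin] with w hw
    rw [norm_mul]
    refine mul_le_mul_of_nonneg_left ?_ (norm_nonneg w)
    calc ‖Complex.log w‖ ≤ |(Complex.log w).re| + |(Complex.log w).im| :=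
          Complex.norm_le_abs_re_add_abs_im _
      _ ≤ |Real.log ‖w‖| + Real.pi := by
          rw [Complex.log_re, Complex.log_im]
          exact add_le_add (le_of_eq (by rfl)) (Complex.abs_arg_le_pi w)
  · have hnorm : Tendsto (fun w : ℂ => ‖w‖) (𝓝[≠] (0:ℂ)) (𝓝[>] 0) := by
      apply tendsto_nhdsWithin_of_tendsto_nhds_of_eventually_within
      · simpa using (continuous_norm.tendsto (0:ℂ)).mono_left nhdsWithin_le_nhds
      · filter_upwards [self_mem_nhdsWithin] with w hw
        exact norm_pos_iff.mpr hw
    exact real_aux14.comp hnorm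
lemma hder14 {z : ℂ} (hz : ‖z‖ < 1) :
    HasDerivAt (fun z => 2 * z + (1 - z) * Complex.log (1 - z))
      (1 - Complex.log (1 - z)) z := by
  have h1 : (1 - z) ∈ Complex.slitPlane := slit14 hz
  have h0 : (1 : ℂ) - z ≠ 0 := Complex.slitPlane_ne_zero h1
  have hin : HasDerivAt (fun w : ℂ => 1 - w) (-1) z := by
    simpa using (hasDerivAt_id z).const_sub 1
  have hl : HasDerivAt (fun w : ℂ => Complex.log (1 - w)) ((1 - z)⁻¹ * -1) z :=
    (Complex.hasDerivAt_log h1).comp z hin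
  have hm := hin.mul hl
  have h2 : HasDerivAt (fun w : ℂ => 2 * w) 2 z := by
    simpa using (hasDerivAt_id z).const_mul 2
  have := h2.add hm
  exact this.congr_deriv (by rw [mul_inv_cancel_left₀ h0]; ring)

lemma inj14 : Set.InjOn (fun z => 2 * z + (1 - z) * Complex.log (1 - z))
    (ball (0 : ℂ) 1) := by
  intro w hw z hz hfe
  by_contra hne
  rw [mem_ball_zero_iff] at hw hz
  set f : ℂ → ℂ := fun z => 2 * z + (1 - z) * Complex.log (1 - z) with hf
  set γ : ℝ → ℂ := fun t => w + (t : ℂ) * (z - w) with hγ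
  have hγmem : ∀ t ∈ Set.Icc (0:ℝ) 1, ‖γ t‖ < 1 := by
    intro t ht
    have : γ t = (1 - t) • w + t • z := by
      simp only [hγ, Complex.real_smul]
      push_cast
      ring
    rw [this, ← mem_ball_zero_iff]
    exact (convex_ball (0:ℂ) 1) (mem_ball_zero_iff.2 hw) (mem_ball_zero_iff.2 hz)
      (by linarith [ht.1, ht.2]) ht.1 (by ring)
  have hγcont : Continuous γ := by continuity
  have hgder : ∀ t ∈ Set.Icc (0:ℝ) 1,
      HasDerivAt (fun t : ℝ => f (γ t))
        ((1 - Complex.log (1 - γ t)) * (z - w)) t := by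
    intro t ht
    have houter : HasDerivAt f (1 - Complex.log (1 - γ t)) (γ t) := hder14 (hγmem t ht)
    have hinner : HasDerivAt (fun u : ℂ => w + u * (z - w)) (z - w) (t : ℂ) := by
      simpa using ((hasDerivAt_id ((t:ℂ))).mul_const (z - w)).const_add w
    have hcomp : HasDerivAt (fun u : ℂ => f (w + u * (z - w)))
        ((1 - Complex.log (1 - γ t)) * (z - w)) (t : ℂ) := by
      have := houter.comp (t : ℂ) hinner
      simpa [hγ, Function.comp_def] using this
    exact hcomp.comp_ofReal
  have hcont : ContinuousOn (fun t : ℝ => (1 - Complex.log (1 - γ t)) * (z - w))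
      (Set.Icc 0 1) := by
    apply ContinuousOn.mul _ continuousOn_const
    apply ContinuousOn.sub continuousOn_const
    apply ContinuousOn.clog
    · exact (continuousOn_const.sub hγcont.continuousOn)
    · intro t ht
      exact slit14 (hγmem t ht)
  have hint : IntervalIntegrable (fun t : ℝ => (1 - Complex.log (1 - γ t)) * (z - w))
      MeasureTheory.volume 0 1 := by
    apply ContinuousOn.intervalIntegrable
    rwa [Set.uIcc_of_le (by norm_num : (0:ℝ) ≤ 1)]
  have heq : ∫ t in (0:ℝ)..1, (1 - Complex.log (1 - γ t)) * (z - w)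
      = (fun t : ℝ => f (γ t)) 1 - (fun t : ℝ => f (γ t)) 0 := by
    exact integral_eq_sub_of_hasDerivAt (f := fun t : ℝ => f (γ t))
      (f' := fun t : ℝ => (1 - Complex.log (1 - γ t)) * (z - w))
      (fun t ht => hgder t (by rwa [Set.uIcc_of_le (by norm_num : (0:ℝ) ≤ 1)] at ht)) hint
  have hγ1 : γ 1 = z := by simp [hγ]
  have hγ0 : γ 0 = w := by simp [hγ]
  simp only [hγ1, hγ0] at heq
  rw [← hfe, sub_self] at heq
  -- factor out (z - w)
  have hzw : z - w ≠ 0 := sub_ne_zero.2 (fun h => hne h.symm)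
  have hint2 : (∫ t in (0:ℝ)..1, (1 - Complex.log (1 - γ t))) * (z - w) = 0 := by
    rw [← intervalIntegral.integral_mul_const]
    exact heq
  have hI : (∫ t in (0:ℝ)..1, (1 - Complex.log (1 - γ t))) = 0 :=
    (mul_eq_zero.1 hint2).resolve_right hzw
  -- take real parts
  have hcont2 : ContinuousOn (fun t : ℝ => (1 - Complex.log (1 - γ t))) (Set.Icc 0 1) := by
    apply ContinuousOn.sub continuousOn_const
    apply ContinuousOn.clog
    · exact (continuousOn_const.sub hγcont.continuousOn)
    · intro t ht
      exact slit14 (hγmem t ht)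
  have hint3 : IntervalIntegrable (fun t : ℝ => (1 - Complex.log (1 - γ t)))
      MeasureTheory.volume 0 1 := by
    apply ContinuousOn.intervalIntegrable
    rwa [Set.uIcc_of_le (by norm_num : (0:ℝ) ≤ 1)]
  -- take real parts
  have hre : (∫ t in (0:ℝ)..1, (1 - Complex.log (1 - γ t)).re) = 0 := by
    have := Complex.reCLM.intervalIntegral_comp_comm hint3
    simp only [Complex.reCLM_apply] at this
    rw [this, hI]
    simp
  -- but the real part is bounded below
  have hlow : ∀ t ∈ Set.Icc (0:ℝ) 1, (1 : ℝ) - Real.log 2 ≤ (1 - Complex.log (1 - γ t)).re := by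
    intro t ht
    have h1 : ‖1 - γ t‖ ≤ 2 := by
      calc ‖1 - γ t‖ ≤ ‖(1:ℂ)‖ + ‖γ t‖ := by
            exact norm_sub_le 1 (γ t)
        _ ≤ 2 := by
            have := (hγmem t ht).le
            simp only [norm_one]
            linarith
    have h0 : 0 < ‖1 - γ t‖ :=
      norm_pos_iff.mpr (Complex.slitPlane_ne_zero (slit14 (hγmem t ht)))
    have : Real.log ‖1 - γ t‖ ≤ Real.log 2 := Real.log_le_log h0 h1
    simp only [Complex.sub_re, Complex.one_re, Complex.log_re]
    linarith
  have hconst : (∫ t in (0:ℝ)..1, ((1:ℝ) - Real.log 2)) ≤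
      ∫ t in (0:ℝ)..1, (1 - Complex.log (1 - γ t)).re := by
    apply intervalIntegral.integral_mono_on (by norm_num)
      intervalIntegrable_const
    · apply ContinuousOn.intervalIntegrable
      rw [Set.uIcc_of_le (by norm_num : (0:ℝ) ≤ 1)]
      exact Complex.continuous_re.comp_continuousOn hcont2
    · exact hlow
  have hlog2 : Real.log 2 < 1 := by
    have := Real.log_two_lt_d9
    linarith
  rw [hre] at hconst
  simp at hconst
  linarith

theorem stmt_14 (f₀ : ℂ → ℂ)
    (hf₀ : ∀ z : ℂ, f₀ z = 2 * z + (1 - z) * Complex.log (1 - z)) :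
    DifferentiableOn ℂ f₀ (ball (0 : ℂ) 1) ∧
    Set.InjOn f₀ (ball (0 : ℂ) 1) ∧
    (∃ F : ℂ → ℂ, ContinuousOn F (closedBall (0 : ℂ) 1) ∧
      Set.EqOn F f₀ (ball (0 : ℂ) 1)) ∧
    (∀ z ∈ ball (0 : ℂ) 1, deriv f₀ z = 1 - Complex.log (1 - z)) ∧
    ¬ BddAbove ((fun z => ‖deriv f₀ z‖) '' ball (0 : ℂ) 1) ∧
    ¬ ∃ C : ℝ, ∀ z ∈ ball (0 : ℂ) 1, ∀ w ∈ ball (0 : ℂ) 1,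
        ‖f₀ z - f₀ w‖ ≤ C * ‖z - w‖ := by
  have hfun : f₀ = fun z => 2 * z + (1 - z) * Complex.log (1 - z) := funext hf₀
  subst hfun
  have hD : ∀ z ∈ ball (0:ℂ) 1,
      HasDerivAt (fun z => 2 * z + (1 - z) * Complex.log (1 - z))
        (1 - Complex.log (1 - z)) z := fun z hz => hder14 (mem_ball_zero_iff.1 hz)
  have hderiv : ∀ z ∈ ball (0:ℂ) 1,
      deriv (fun z => 2 * z + (1 - z) * Complex.log (1 - z)) z
        = 1 - Complex.log (1 - z) := fun z hz => (hD z hz).deriv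
  have hunb : ¬ BddAbove ((fun z =>
      ‖deriv (fun z => 2 * z + (1 - z) * Complex.log (1 - z)) z‖) '' ball (0 : ℂ) 1) := by
    rintro ⟨C, hC⟩
    set x : ℝ := Real.exp (-(|C| + 1)) with hx
    have hx0 : 0 < x := Real.exp_pos _
    have hx1 : x < 1 := by
      rw [hx]
      calc Real.exp (-(|C| + 1)) < Real.exp 0 := by
            apply Real.exp_lt_exp.2
            have := abs_nonneg C
            linarith
        _ = 1 := Real.exp_zero
    set z : ℂ := ((1 - x : ℝ) : ℂ) with hzdef
    have hzball : z ∈ ball (0:ℂ) 1 := by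
      rw [mem_ball_zero_iff, hzdef]
      have : ‖((1 - x : ℝ) : ℂ)‖ = |1 - x| := by
        rw [Complex.norm_real, Real.norm_eq_abs]
      rw [this, _root_.abs_of_nonneg (by linarith : (0:ℝ) ≤ 1 - x)]
      linarith
    have h1z : (1 : ℂ) - z = ((x : ℝ) : ℂ) := by
      rw [hzdef]; push_cast; ring
    have hlog : Complex.log (1 - z) = ((Real.log x : ℝ) : ℂ) := by
      rw [h1z, Complex.ofReal_log hx0.le]
    have hlogx : Real.log x = -(|C| + 1) := by
      rw [hx, Real.log_exp]
    have hval : deriv (fun z => 2 * z + (1 - z) * Complex.log (1 - z)) z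
        = ((1 + (|C| + 1) : ℝ) : ℂ) := by
      rw [hderiv z hzball, hlog, hlogx]
      push_cast; ring
    have := hC (Set.mem_image_of_mem _ hzball)
    rw [hval] at this
    simp only [Complex.norm_real, Real.norm_eq_abs] at this
    have habs : |1 + (|C| + 1)| = 1 + (|C| + 1) := abs_of_nonneg (by positivity)
    rw [habs] at this
    have := abs_nonneg C
    have := le_abs_self C
    linarith
  refine ⟨?_, ?_, ?_, hderiv, hunb, ?_⟩
  · intro z hz
    exact ((hD z hz).differentiableAt).differentiableWithinAt
  · exact inj14
  · -- continuous extension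
    refine ⟨fun z => 2 * z + (1 - z) * Complex.log (1 - z), ?_, fun z _ => rfl⟩
    intro z hz
    rw [mem_closedBall_zero_iff] at hz
    by_cases hz1 : z = 1
    · subst hz1
      rw [← continuousWithinAt_diff_self]
      have h2z : ContinuousWithinAt (fun z : ℂ => 2 * z)
          (closedBall (0:ℂ) 1 \ {1}) 1 :=
        (continuous_const.mul continuous_id).continuousWithinAt
      have hterm : Tendsto (fun z : ℂ => (1 - z) * Complex.log (1 - z))
          (𝓝[closedBall (0:ℂ) 1 \ {1}] 1) (𝓝 0) := by
        have hmap : Tendsto (fun z : ℂ => 1 - z)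
            (𝓝[closedBall (0:ℂ) 1 \ {1}] 1) (𝓝[≠] (0:ℂ)) := by
          apply tendsto_nhdsWithin_of_tendsto_nhds_of_eventually_within
          · have : Tendsto (fun z : ℂ => 1 - z) (𝓝 1) (𝓝 (1 - 1)) :=
              (continuous_const.sub continuous_id).tendsto 1
            simpa using this.mono_left nhdsWithin_le_nhds
          · filter_upwards [self_mem_nhdsWithin] with w hw
            simp only [Set.mem_compl_iff, Set.mem_singleton_iff, sub_eq_zero]
            exact fun h => hw.2 (Set.mem_singleton_iff.2 h.symm)
        exact mul_log_tendsto14.comp hmap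
      have : ContinuousWithinAt (fun z : ℂ => 2 * z + (1 - z) * Complex.log (1 - z))
          (closedBall (0:ℂ) 1 \ {1}) 1 := by
        unfold ContinuousWithinAt
        have hval : (fun z : ℂ => 2 * z + (1 - z) * Complex.log (1 - z)) 1 = 2 := by
          simp
        rw [hval]
        have := h2z.tendsto.add hterm
        simpa using this
      exact this
    · -- z ≠ 1 : the function is continuous at z
      apply ContinuousAt.continuousWithinAt
      apply ContinuousAt.add
      · exact (continuous_const.mul continuous_id).continuousAt
      · apply ContinuousAt.mul
        · exact (continuous_const.sub continuous_id).continuousAt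
        · exact ContinuousAt.clog (continuous_const.sub continuous_id).continuousAt
            (slit14' hz hz1)
  · -- not Lipschitz
    rintro ⟨C, hC⟩
    apply hunb
    refine ⟨max C 0, ?_⟩
    rintro y ⟨z, hz, rfl⟩
    have hball : ball (0:ℂ) 1 ∈ 𝓝 z := (isOpen_ball).mem_nhds hz
    have hfd : HasFDerivAt (fun z => 2 * z + (1 - z) * Complex.log (1 - z))
        ((1 : ℂ →L[ℂ] ℂ).smulRight (1 - Complex.log (1 - z))) z :=
      (hD z hz).hasFDerivAt
    have hle : ‖(1 : ℂ →L[ℂ] ℂ).smulRight (1 - Complex.log (1 - z))‖ ≤ max C 0 := by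
      apply hfd.le_of_lip' (le_max_right C 0)
      filter_upwards [hball] with w hw
      calc ‖(fun z => 2 * z + (1 - z) * Complex.log (1 - z)) w -
            (fun z => 2 * z + (1 - z) * Complex.log (1 - z)) z‖
          ≤ C * ‖w - z‖ := hC w hw z hz
        _ ≤ max C 0 * ‖w - z‖ :=
            mul_le_mul_of_nonneg_right (le_max_left C 0) (norm_nonneg _)
    dsimp only
    rw [hderiv z hz]
    calc ‖1 - Complex.log (1 - z)‖
        = ‖((1 : ℂ →L[ℂ] ℂ).smulRight (1 - Complex.log (1 - z))) 1‖ := by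
          simp
      _ ≤ ‖(1 : ℂ →L[ℂ] ℂ).smulRight (1 - Complex.log (1 - z))‖ * ‖(1:ℂ)‖ :=
          ContinuousLinearMap.le_opNorm _ _
      _ ≤ max C 0 := by
          rw [norm_one, mul_one]
          exact hle
end
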